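/- Convexity of conditional value-at-risk: for any two integrable real-valued random variables X₁ and X₂ on a common probability space, every λ ∈ [0,1], and every confidence level γ ∈ (0,1), CVaR_γ(λ·X₁ + (1−λ)·X₂) ≤ λ·CVaR_γ(X₁) + (1−λ)·CVaR_γ(X₂). -/

import Mathlib

open MeasureTheory

/-- Value-at-risk of the return `X` at confidence level `β`:
`VaR_β(X) = inf {x ∈ ℝ : ℙ(x + X < 0) ≤ 1 - β}`. -/
noncomputable def VaR {Ω : Type*} [MeasurableSpace Ω] (P : Measure Ω) (X : Ω → ℝ) (β : ℝ) : ℝ :=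
  sInf {x : ℝ | (P {ω | x + X ω < 0}).toReal ≤ 1 - β}

/-- Conditional value-at-risk of the return `X` at confidence level `γ`:
`CVaR_γ(X) = (1/(1-γ)) ∫_γ^1 VaR_β(X) dβ`. -/
noncomputable def CVaR {Ω : Type*} [MeasurableSpace Ω] (P : Measure Ω) (X : Ω → ℝ) (γ : ℝ) : ℝ :=
  (1 / (1 - γ)) * ∫ β in γ..1, VaR P X β

open Set

set_option linter.unusedSectionVars false

section Aux

variable {Ω : Type*} [MeasurableSpace Ω] (P : Measure Ω) [IsProbabilityMeasure P]
  (X : Ω → ℝ)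

/-- tail function -/
noncomputable def tailG (x : ℝ) : ℝ := (P {ω | x + X ω < 0}).toReal

lemma tailG_nonneg (x : ℝ) : 0 ≤ tailG P X x := ENNReal.toReal_nonneg

lemma tailG_le_one (x : ℝ) : tailG P X x ≤ 1 := by
  have : P {ω | x + X ω < 0} ≤ 1 := prob_le_one
  simpa [tailG] using ENNReal.toReal_le_of_le_ofReal zero_le_one (by simpa using this)

lemma tailG_anti : Antitone (tailG P X) := by
  intro x y hxy
  apply ENNReal.toReal_mono (measure_ne_top _ _)
  apply measure_mono
  intro ω hω
  simp only [mem_setOf_eq] at *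
  linarith

lemma ofReal_tailG (x : ℝ) : ENNReal.ofReal (tailG P X x) = P {ω | x + X ω < 0} :=
  ENNReal.ofReal_toReal (measure_ne_top _ _)

end Aux

section Aux2
set_option linter.unusedSectionVars false

variable {Ω : Type*} [MeasurableSpace Ω] (P : Measure Ω) [IsProbabilityMeasure P]
  {X : Ω → ℝ} (hXm : Measurable X)

/-- the defining set of VaR -/
def VaRset (β : ℝ) : Set ℝ := {x : ℝ | (P {ω | x + X ω < 0}).toReal ≤ 1 - β}

include hXm

lemma VaRset_nonempty {β : ℝ} (hβ : β < 1) : (VaRset P (X := X) β).Nonempty := by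
  have hmeas : ∀ n : ℕ, MeasurableSet {ω | (n : ℝ) + X ω < 0} := by
    intro n
    exact measurableSet_lt (by measurability) measurable_const
  have hanti : Antitone (fun n : ℕ => {ω | (n : ℝ) + X ω < 0}) := by
    intro n m hnm ω hω
    simp only [mem_setOf_eq] at *
    have : (n : ℝ) ≤ m := by exact_mod_cast hnm
    linarith
  have hempty : ⋂ n : ℕ, {ω | (n : ℝ) + X ω < 0} = (∅ : Set Ω) := by
    ext ω
    simp only [mem_iInter, mem_setOf_eq, mem_empty_iff_false, iff_false, not_forall, not_lt]
    obtain ⟨n, hn⟩ := exists_nat_ge (-X ω)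
    exact ⟨n, by linarith⟩
  have htends : Filter.Tendsto (fun n : ℕ => P {ω | (n : ℝ) + X ω < 0}) Filter.atTop (nhds 0) := by
    have := tendsto_measure_iInter_atTop (μ := P)
      (fun n => (hmeas n).nullMeasurableSet) hanti ⟨0, measure_ne_top _ _⟩
    rw [hempty] at this
    simpa [Function.comp_def] using this
  have hpos : (0 : ENNReal) < ENNReal.ofReal (1 - β) := by
    simp [ENNReal.ofReal_pos]; linarith
  have := htends.eventually_lt_const hpos
  obtain ⟨n, hn⟩ := this.exists
  refine ⟨n, ?_⟩
  simp only [VaRset, mem_setOf_eq]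
  exact ENNReal.toReal_le_of_le_ofReal (by linarith) hn.le

lemma VaRset_bddBelow {β : ℝ} (hβ : 0 < β) (hβ1 : β ≤ 1) : BddBelow (VaRset P (X := X) β) := by
  have hmono : Monotone (fun n : ℕ => {ω | -(n : ℝ) + X ω < 0}) := by
    intro n m hnm ω hω
    simp only [mem_setOf_eq] at *
    have : (n : ℝ) ≤ m := by exact_mod_cast hnm
    linarith
  have huniv : ⋃ n : ℕ, {ω | -(n : ℝ) + X ω < 0} = (univ : Set Ω) := by
    ext ω
    simp only [mem_iUnion, mem_setOf_eq, mem_univ, iff_true]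
    obtain ⟨n, hn⟩ := exists_nat_gt (X ω)
    exact ⟨n, by linarith⟩
  have htends : Filter.Tendsto (fun n : ℕ => P {ω | -(n : ℝ) + X ω < 0}) Filter.atTop (nhds 1) := by
    have := tendsto_measure_iUnion_atTop (μ := P) hmono
    rw [huniv] at this
    simpa [Function.comp_def] using this
  have hlt : ENNReal.ofReal (1 - β) < 1 := by
    apply lt_of_lt_of_le (b := ENNReal.ofReal 1)
    · exact ENNReal.ofReal_lt_ofReal_iff_of_nonneg (by linarith) |>.mpr (by linarith)
    · simp
  obtain ⟨n, hn⟩ := (htends.eventually_const_lt hlt).exists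
  refine ⟨-(n : ℝ), fun x hx => ?_⟩
  by_contra hlt'
  push_neg at hlt'
  simp only [VaRset, mem_setOf_eq] at hx
  have hsub : {ω | -(n : ℝ) + X ω < 0} ⊆ {ω | x + X ω < 0} := by
    intro ω hω
    simp only [mem_setOf_eq] at *
    linarith
  have : P {ω | -(n : ℝ) + X ω < 0} ≤ P {ω | x + X ω < 0} := measure_mono hsub
  have h2 : ENNReal.ofReal (1 - β) < P {ω | x + X ω < 0} := lt_of_lt_of_le hn this
  have := ENNReal.toReal_mono (measure_ne_top _ _) h2.le
  rw [ENNReal.toReal_ofReal (by linarith)] at this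
  have hne : P {ω | x + X ω < 0} ≠ ENNReal.ofReal (1 - β) := by
    intro h; rw [h] at h2; exact lt_irrefl _ h2
  have hstrict : 1 - β < (P {ω | x + X ω < 0}).toReal := by
    rcases lt_or_eq_of_le this with h | h
    · exact h
    · exfalso; apply hne
      rw [← ENNReal.ofReal_toReal (measure_ne_top P _), ← h]
  linarith

end Aux2

section Aux3
set_option linter.unusedSectionVars false

variable {Ω : Type*} [MeasurableSpace Ω] (P : Measure Ω) [IsProbabilityMeasure P]
  {X : Ω → ℝ} (hXm : Measurable X)

lemma VaR_def (β : ℝ) : VaR P X β = sInf (VaRset P (X := X) β) := rfl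

include hXm

lemma VaR_mono {β₁ β₂ : ℝ} (h0 : 0 < β₁) (hle : β₁ ≤ β₂) (h1 : β₂ < 1) :
    VaR P X β₁ ≤ VaR P X β₂ := by
  rw [VaR_def, VaR_def]
  apply csInf_le_csInf (VaRset_bddBelow P hXm h0 (by linarith)) (VaRset_nonempty P hXm h1)
  intro x hx
  simp only [VaRset, mem_setOf_eq] at *
  linarith

lemma VaR_le_iff {β : ℝ} (h0 : 0 < β) (h1 : β < 1) (x : ℝ) :
    VaR P X β ≤ x ↔ tailG P X x ≤ 1 - β := by
  constructor
  · intro h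
    have key : ∀ n : ℕ, tailG P X (x + 1 / (n + 1)) ≤ 1 - β := by
      intro n
      have hlt : sInf (VaRset P (X := X) β) < x + 1 / (n + 1) := by
        rw [← VaR_def]
        have : (0:ℝ) < 1 / ((n:ℝ) + 1) := by positivity
        linarith
      obtain ⟨y, hy, hylt⟩ := exists_lt_of_csInf_lt (VaRset_nonempty P hXm h1) hlt
      have := tailG_anti P X hylt.le
      simp only [VaRset, mem_setOf_eq] at hy
      calc tailG P X (x + 1 / (n + 1)) ≤ tailG P X y := this
        _ ≤ 1 - β := hy
    -- right continuity
    have hmono : Monotone (fun n : ℕ => {ω | (x + 1 / (n + 1)) + X ω < 0}) := by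
      intro n m hnm ω hω
      simp only [mem_setOf_eq] at *
      have h1' : 1 / ((m:ℝ) + 1) ≤ 1 / ((n:ℝ) + 1) := by
        apply one_div_le_one_div_of_le (by positivity)
        have : (n:ℝ) ≤ m := by exact_mod_cast hnm
        linarith
      linarith
    have huniv : ⋃ n : ℕ, {ω | (x + 1 / (n + 1)) + X ω < 0} = {ω | x + X ω < 0} := by
      ext ω
      simp only [mem_iUnion, mem_setOf_eq]
      constructor
      · rintro ⟨n, hn⟩
        have : (0:ℝ) < 1 / ((n:ℝ) + 1) := by positivity
        linarith
      · intro hω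
        obtain ⟨n, hn⟩ := exists_nat_one_div_lt (show (0:ℝ) < -(x + X ω) by linarith)
        exact ⟨n, by linarith⟩
    have htends : Filter.Tendsto (fun n : ℕ => P {ω | (x + 1 / (n + 1)) + X ω < 0})
        Filter.atTop (nhds (P {ω | x + X ω < 0})) := by
      have := tendsto_measure_iUnion_atTop (μ := P) hmono
      rwa [huniv] at this
    have hle' : P {ω | x + X ω < 0} ≤ ENNReal.ofReal (1 - β) := by
      apply le_of_tendsto htends
      filter_upwards with n
      have := key n
      rw [tailG] at this
      rw [← ofReal_tailG P X]
      exact ENNReal.ofReal_le_ofReal this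
    have := ENNReal.toReal_mono (by simp) hle'
    rwa [ENNReal.toReal_ofReal (by linarith)] at this
  · intro h
    rw [VaR_def]
    exact csInf_le (VaRset_bddBelow P hXm h0 h1.le) h

lemma lt_VaR_iff {β : ℝ} (h0 : 0 < β) (h1 : β < 1) (x : ℝ) :
    x < VaR P X β ↔ 1 - β < tailG P X x := by
  rw [← not_le, ← not_le, VaR_le_iff P hXm h0 h1]

end Aux3

section Aux4
set_option linter.unusedSectionVars false

variable {Ω : Type*} [MeasurableSpace Ω] (P : Measure Ω) [IsProbabilityMeasure P]
  {X : Ω → ℝ} (hXm : Measurable X)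

include hXm

lemma levelset_eq (x : ℝ) :
    {β | β ∈ Ioo (0:ℝ) 1 ∧ x < VaR P X β} = Ioo (1 - tailG P X x) 1 := by
  ext β
  simp only [mem_setOf_eq, mem_Ioo]
  constructor
  · rintro ⟨⟨h0, h1⟩, hx⟩
    rw [lt_VaR_iff P hXm h0 h1] at hx
    exact ⟨by linarith, h1⟩
  · rintro ⟨hg, h1⟩
    have h0 : 0 < β := lt_of_le_of_lt (by linarith [tailG_le_one P X x]) hg
    exact ⟨⟨h0, h1⟩, (lt_VaR_iff P hXm h0 h1 x).mpr (by linarith)⟩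

lemma levelset_volume (x : ℝ) :
    volume {β | β ∈ Ioo (0:ℝ) 1 ∧ x < VaR P X β} = ENNReal.ofReal (tailG P X x) := by
  rw [levelset_eq P hXm, Real.volume_Ioo]
  congr 1
  ring

end Aux4

section Aux5
set_option linter.unusedSectionVars false

variable {Ω : Type*} [MeasurableSpace Ω] (P : Measure Ω) [IsProbabilityMeasure P]
  {X : Ω → ℝ} (hXm : Measurable X)

include hXm

lemma VaR_monotoneOn : MonotoneOn (VaR P X) (Ioo (0:ℝ) 1) := by
  intro a ha b hb hab
  exact VaR_mono P hXm ha.1 hab hb.2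

lemma VaR_aemeasurable : AEMeasurable (VaR P X) (volume.restrict (Ioo (0:ℝ) 1)) :=
  aemeasurable_restrict_of_monotoneOn measurableSet_Ioo (VaR_monotoneOn P hXm)

lemma key_lintegral (t : ℝ) :
    ∫⁻ β in Ioo (0:ℝ) 1, ENNReal.ofReal (max (VaR P X β - t) 0)
      = ∫⁻ ω, ENNReal.ofReal (max (-X ω - t) 0) ∂P := by
  have hql : AEMeasurable (fun β => max (VaR P X β - t) 0) (volume.restrict (Ioo (0:ℝ) 1)) :=
    ((VaR_aemeasurable P hXm).sub aemeasurable_const).max aemeasurable_const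
  have hqr : AEMeasurable (fun ω => max (-X ω - t) 0) P :=
    ((hXm.neg.sub measurable_const).max measurable_const).aemeasurable
  rw [lintegral_eq_lintegral_meas_lt (f := fun β => max (VaR P X β - t) 0) _
      (Filter.Eventually.of_forall fun _ => le_max_right _ _) hql,
    lintegral_eq_lintegral_meas_lt (f := fun ω => max (-X ω - t) 0) _
      (Filter.Eventually.of_forall fun _ => le_max_right _ _) hqr]
  apply setLIntegral_congr_fun measurableSet_Ioi
  intro s hs
  have hs' : (0:ℝ) < s := hs
  have hmax : ∀ a : ℝ, (s < max a 0) ↔ s < a := by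
    intro a
    constructor
    · intro h
      rcases le_or_gt a 0 with h' | h'
      · rw [max_eq_right h'] at h; linarith
      · rwa [max_eq_left h'.le] at h
    · intro h; rw [max_eq_left (by linarith)]; exact h
  have h1 : {β : ℝ | s < max (VaR P X β - t) 0} ∩ Ioo (0:ℝ) 1
      = {β | β ∈ Ioo (0:ℝ) 1 ∧ (t + s) < VaR P X β} := by
    ext β
    simp only [mem_inter_iff, mem_setOf_eq, hmax]
    constructor
    · rintro ⟨h, h2⟩; exact ⟨h2, by linarith⟩
    · rintro ⟨h2, h⟩; exact ⟨by linarith, h2⟩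
  have h2 : {ω : Ω | s < max (-X ω - t) 0} = {ω | (t + s) + X ω < 0} := by
    ext ω
    simp only [mem_setOf_eq, hmax]
    constructor <;> intro h <;> linarith
  beta_reduce
  rw [Measure.restrict_apply' measurableSet_Ioo, h1, h2,
    levelset_volume P hXm, ofReal_tailG]

lemma pospart_integrableOn (hXi : Integrable X P) (t : ℝ) :
    IntegrableOn (fun β => max (VaR P X β - t) 0) (Ioo (0:ℝ) 1) := by
  have hint : Integrable (fun ω => max (-X ω - t) 0) P :=
    (hXi.neg.sub (integrable_const t)).pos_part
  have hql : AEMeasurable (fun β => max (VaR P X β - t) 0) (volume.restrict (Ioo (0:ℝ) 1)) :=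
    ((VaR_aemeasurable P hXm).sub aemeasurable_const).max aemeasurable_const
  rw [IntegrableOn, ← lintegral_ofReal_ne_top_iff_integrable hql.aestronglyMeasurable
    (Filter.Eventually.of_forall fun _ => le_max_right _ _)]
  rw [key_lintegral P hXm t]
  rw [lintegral_ofReal_ne_top_iff_integrable hint.aestronglyMeasurable
    (Filter.Eventually.of_forall fun _ => le_max_right _ _)]
  exact hint

lemma key_integral (hXi : Integrable X P) (t : ℝ) :
    ∫ β in Ioo (0:ℝ) 1, max (VaR P X β - t) 0 = ∫ ω, max (-X ω - t) 0 ∂P := by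
  have hint : Integrable (fun ω => max (-X ω - t) 0) P :=
    (hXi.neg.sub (integrable_const t)).pos_part
  have hql := pospart_integrableOn P hXm hXi t
  rw [integral_eq_lintegral_of_nonneg_ae (f := fun β => max (VaR P X β - t) 0)
      (Filter.Eventually.of_forall fun _ => le_max_right _ _) hql.aestronglyMeasurable,
    integral_eq_lintegral_of_nonneg_ae (f := fun ω => max (-X ω - t) 0)
      (Filter.Eventually.of_forall fun _ => le_max_right _ _) hint.aestronglyMeasurable,
    key_lintegral P hXm t]

end Aux5

section Aux6
set_option linter.unusedSectionVars false

variable {Ω : Type*} [MeasurableSpace Ω] (P : Measure Ω) [IsProbabilityMeasure P]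
  {X : Ω → ℝ} (hXm : Measurable X) (hXi : Integrable X P)
  {γ : ℝ} (hγ : γ ∈ Ioo (0:ℝ) 1)

include hXm hXi hγ

lemma VaR_integrableOn : IntegrableOn (VaR P X) (Ioo γ 1) := by
  set t₀ := VaR P X γ
  have h1 : IntegrableOn (fun β => t₀ + max (VaR P X β - t₀) 0) (Ioo γ 1) := by
    apply Integrable.add
    · exact integrableOn_const (by rw [Real.volume_Ioo]; exact ENNReal.ofReal_ne_top)
    · exact (pospart_integrableOn P hXm hXi t₀).mono_set (Ioo_subset_Ioo hγ.1.le le_rfl)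
  refine (h1.congr_fun (fun β hβ => ?_) measurableSet_Ioo)
  have hle : t₀ ≤ VaR P X β := VaR_mono P hXm hγ.1 hβ.1.le hβ.2
  simp only [max_eq_left (show (0:ℝ) ≤ VaR P X β - t₀ by linarith)]
  ring

lemma setIntegral_VaR_eq : ∫ β in Ioo γ 1, VaR P X β
    = (1 - γ) * VaR P X γ + ∫ ω, max (-X ω - VaR P X γ) 0 ∂P := by
  set t₀ := VaR P X γ with ht₀
  have hposint := (pospart_integrableOn P hXm hXi t₀)
  have hsub : Ioo γ 1 ⊆ Ioo (0:ℝ) 1 := Ioo_subset_Ioo hγ.1.le le_rfl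
  have h1 : ∫ β in Ioo γ 1, VaR P X β
      = ∫ β in Ioo γ 1, (t₀ + max (VaR P X β - t₀) 0) := by
    apply setIntegral_congr_fun measurableSet_Ioo
    intro β hβ
    have hle : t₀ ≤ VaR P X β := VaR_mono P hXm hγ.1 hβ.1.le hβ.2
    simp only [max_eq_left (show (0:ℝ) ≤ VaR P X β - t₀ by linarith)]
    ring
  have h2 : ∫ β in Ioo γ 1, (t₀ + max (VaR P X β - t₀) 0)
      = (1 - γ) * t₀ + ∫ β in Ioo γ 1, max (VaR P X β - t₀) 0 := by
    rw [integral_add (μ := volume.restrict (Ioo γ 1))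
      (integrableOn_const (μ := volume) (s := Ioo γ 1) (C := t₀)
        (by rw [Real.volume_Ioo]; exact ENNReal.ofReal_ne_top))
      (hposint.mono_set hsub)]
    congr 1
    rw [setIntegral_const, measureReal_def, Real.volume_Ioo, ENNReal.toReal_ofReal (by linarith [hγ.2]),
      smul_eq_mul]
  have h3 : ∫ β in Ioo γ 1, max (VaR P X β - t₀) 0
      = ∫ β in Ioo (0:ℝ) 1, max (VaR P X β - t₀) 0 := by
    rw [← Ioc_union_Ioo_eq_Ioo hγ.1.le hγ.2,
      setIntegral_union ((by
          apply Set.disjoint_left.mpr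
          rintro β ⟨_, h1⟩ ⟨h2, _⟩
          exact absurd h1 (not_le.mpr h2))) measurableSet_Ioo
        (hposint.mono_set (by rw [← Ioc_union_Ioo_eq_Ioo hγ.1.le hγ.2]; exact subset_union_left))
        (hposint.mono_set hsub)]
    have hzero : ∫ β in Ioc (0:ℝ) γ, max (VaR P X β - t₀) 0 = 0 := by
      rw [setIntegral_congr_fun measurableSet_Ioc (g := fun _ => (0:ℝ))]
      · simp
      · intro β hβ
        have hle : VaR P X β ≤ t₀ := VaR_mono P hXm hβ.1 hβ.2 hγ.2
        simp only
        rw [max_eq_right (by linarith)]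
    rw [hzero, zero_add]
  rw [h1, h2, h3, key_integral P hXm hXi t₀]

lemma setIntegral_VaR_le (t : ℝ) : ∫ β in Ioo γ 1, VaR P X β
    ≤ (1 - γ) * t + ∫ ω, max (-X ω - t) 0 ∂P := by
  have hposint := (pospart_integrableOn P hXm hXi t)
  have hsub : Ioo γ 1 ⊆ Ioo (0:ℝ) 1 := Ioo_subset_Ioo hγ.1.le le_rfl
  have hconst : IntegrableOn (fun _ : ℝ => t) (Ioo γ 1) :=
    integrableOn_const (by rw [Real.volume_Ioo]; exact ENNReal.ofReal_ne_top)
  have h1 : ∫ β in Ioo γ 1, VaR P X β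
      ≤ ∫ β in Ioo γ 1, (t + max (VaR P X β - t) 0) := by
    apply setIntegral_mono_on (VaR_integrableOn P hXm hXi hγ)
      (hconst.add (hposint.mono_set hsub)) measurableSet_Ioo
    intro β hβ
    simp only [Pi.add_apply]
    rcases le_total (VaR P X β) t with h | h
    · rw [max_eq_right (by linarith)]; linarith
    · rw [max_eq_left (by linarith)]; linarith
  have h2 : ∫ β in Ioo γ 1, (t + max (VaR P X β - t) 0)
      = (1 - γ) * t + ∫ β in Ioo γ 1, max (VaR P X β - t) 0 := by
    rw [integral_add hconst (hposint.mono_set hsub)]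
    congr 1
    rw [setIntegral_const, measureReal_def, Real.volume_Ioo, ENNReal.toReal_ofReal (by linarith [hγ.2]),
      smul_eq_mul]
  have h3 : ∫ β in Ioo γ 1, max (VaR P X β - t) 0
      ≤ ∫ β in Ioo (0:ℝ) 1, max (VaR P X β - t) 0 := by
    apply setIntegral_mono_set hposint
      (Filter.Eventually.of_forall fun _ => le_max_right _ _)
      (HasSubset.Subset.eventuallyLE hsub)
  calc ∫ β in Ioo γ 1, VaR P X β ≤ (1 - γ) * t + ∫ β in Ioo γ 1, max (VaR P X β - t) 0 := by
        rw [← h2]; exact h1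
    _ ≤ (1 - γ) * t + ∫ β in Ioo (0:ℝ) 1, max (VaR P X β - t) 0 := by linarith
    _ = (1 - γ) * t + ∫ ω, max (-X ω - t) 0 ∂P := by rw [key_integral P hXm hXi t]

end Aux6

section Main
set_option linter.unusedSectionVars false

variable {Ω : Type*} [MeasurableSpace Ω] (P : Measure Ω) [IsProbabilityMeasure P]

lemma CVaR_convex_meas {X₁ X₂ : Ω → ℝ} (hm₁ : Measurable X₁) (hm₂ : Measurable X₂)
    (hX₁ : Integrable X₁ P) (hX₂ : Integrable X₂ P)
    (lam : ℝ) (hlam : lam ∈ Set.Icc (0 : ℝ) 1) (γ : ℝ) (hγ : γ ∈ Set.Ioo (0 : ℝ) 1) :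
    CVaR P (fun ω => lam * X₁ ω + (1 - lam) * X₂ ω) γ
      ≤ lam * CVaR P X₁ γ + (1 - lam) * CVaR P X₂ γ := by
  obtain ⟨hl0, hl1⟩ := hlam
  set Xm : Ω → ℝ := fun ω => lam * X₁ ω + (1 - lam) * X₂ ω with hXm_def
  have hmm : Measurable Xm := (hm₁.const_mul lam).add (hm₂.const_mul (1 - lam))
  have hmi : Integrable Xm P := (hX₁.const_mul lam).add (hX₂.const_mul (1 - lam))
  set t₁ := VaR P X₁ γ
  set t₂ := VaR P X₂ γ
  set t := lam * t₁ + (1 - lam) * t₂ with ht_def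
  have hint₁ : Integrable (fun ω => max (-X₁ ω - t₁) 0) P :=
    (hX₁.neg.sub (integrable_const t₁)).pos_part
  have hint₂ : Integrable (fun ω => max (-X₂ ω - t₂) 0) P :=
    (hX₂.neg.sub (integrable_const t₂)).pos_part
  have hintm : Integrable (fun ω => max (-Xm ω - t) 0) P :=
    (hmi.neg.sub (integrable_const t)).pos_part
  have h1 : ∫ β in Ioo γ 1, VaR P Xm β ≤ (1 - γ) * t + ∫ ω, max (-Xm ω - t) 0 ∂P :=
    setIntegral_VaR_le P hmm hmi hγ t
  have h2 : ∫ ω, max (-Xm ω - t) 0 ∂P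
      ≤ lam * ∫ ω, max (-X₁ ω - t₁) 0 ∂P + (1 - lam) * ∫ ω, max (-X₂ ω - t₂) 0 ∂P := by
    rw [← integral_const_mul, ← integral_const_mul,
      ← integral_add (hint₁.const_mul lam) (hint₂.const_mul (1 - lam))]
    apply integral_mono hintm ((hint₁.const_mul lam).add (hint₂.const_mul (1 - lam)))
    intro ω
    simp only
    have e1 : -Xm ω - t = lam * (-X₁ ω - t₁) + (1 - lam) * (-X₂ ω - t₂) := by
      simp only [hXm_def, ht_def]; ring
    have hb₁ : lam * (-X₁ ω - t₁) ≤ lam * max (-X₁ ω - t₁) 0 :=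
      mul_le_mul_of_nonneg_left (le_max_left _ _) hl0
    have hb₂ : (1 - lam) * (-X₂ ω - t₂) ≤ (1 - lam) * max (-X₂ ω - t₂) 0 :=
      mul_le_mul_of_nonneg_left (le_max_left _ _) (by linarith)
    have hnn : 0 ≤ lam * max (-X₁ ω - t₁) 0 + (1 - lam) * max (-X₂ ω - t₂) 0 :=
      add_nonneg (mul_nonneg hl0 (le_max_right _ _))
        (mul_nonneg (by linarith) (le_max_right _ _))
    apply max_le _ hnn
    rw [e1]
    linarith
  have heq₁ : ∫ β in Ioo γ 1, VaR P X₁ β = (1 - γ) * t₁ + ∫ ω, max (-X₁ ω - t₁) 0 ∂P :=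
    setIntegral_VaR_eq P hm₁ hX₁ hγ
  have heq₂ : ∫ β in Ioo γ 1, VaR P X₂ β = (1 - γ) * t₂ + ∫ ω, max (-X₂ ω - t₂) 0 ∂P :=
    setIntegral_VaR_eq P hm₂ hX₂ hγ
  have hkey : ∫ β in Ioo γ 1, VaR P Xm β
      ≤ lam * (∫ β in Ioo γ 1, VaR P X₁ β) + (1 - lam) * ∫ β in Ioo γ 1, VaR P X₂ β := by
    have arith : ∀ Am B₁ B₂ Im I₁ I₂ tt : ℝ, Am ≤ (1 - γ) * tt + Im →
        Im ≤ lam * I₁ + (1 - lam) * I₂ → B₁ = (1 - γ) * t₁ + I₁ → B₂ = (1 - γ) * t₂ + I₂ →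
        tt = lam * t₁ + (1 - lam) * t₂ → Am ≤ lam * B₁ + (1 - lam) * B₂ := by
      intro Am B₁ B₂ Im I₁ I₂ tt h1 h2 hB₁ hB₂ htt
      have hr : lam * B₁ + (1 - lam) * B₂ = (1 - γ) * tt + (lam * I₁ + (1 - lam) * I₂) := by
        rw [hB₁, hB₂, htt]; ring
      linarith
    exact arith _ _ _ _ _ _ _ h1 h2 heq₁ heq₂ ht_def
  -- convert to CVaR
  have hIoo : ∀ Y : Ω → ℝ, ∫ β in γ..1, VaR P Y β = ∫ β in Ioo γ 1, VaR P Y β := by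
    intro Y
    rw [intervalIntegral.integral_of_le hγ.2.le, integral_Ioc_eq_integral_Ioo]
  have hc : 0 ≤ 1 / (1 - γ) := by
    apply le_of_lt; apply div_pos one_pos; linarith [hγ.2]
  simp only [CVaR, hIoo]
  have final : ∀ a b c : ℝ, a ≤ lam * b + (1 - lam) * c →
      (1 / (1 - γ)) * a ≤ lam * ((1 / (1 - γ)) * b) + (1 - lam) * ((1 / (1 - γ)) * c) := by
    intro a b c h
    calc (1 / (1 - γ)) * a ≤ (1 / (1 - γ)) * (lam * b + (1 - lam) * c) :=
          mul_le_mul_of_nonneg_left h hc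
      _ = lam * ((1 / (1 - γ)) * b) + (1 - lam) * ((1 / (1 - γ)) * c) := by ring
  exact final _ _ _ hkey

lemma VaR_congr' {X X' : Ω → ℝ} (h : X =ᵐ[P] X') (β : ℝ) : VaR P X β = VaR P X' β := by
  unfold VaR
  congr 1
  ext x
  have : P {ω | x + X ω < 0} = P {ω | x + X' ω < 0} := by
    apply measure_congr
    filter_upwards [h] with ω hω
    change (x + X ω < 0) = (x + X' ω < 0)
    rw [hω]
  simp only [Set.mem_setOf_eq, this]

lemma CVaR_congr' {X X' : Ω → ℝ} (h : X =ᵐ[P] X') (γ : ℝ) : CVaR P X γ = CVaR P X' γ := by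
  have : VaR P X = VaR P X' := funext (VaR_congr' P h)
  unfold CVaR
  rw [this]

end Main

theorem CVaR_convex {Ω : Type*} [MeasurableSpace Ω]
    (P : Measure Ω) [IsProbabilityMeasure P] (X₁ X₂ : Ω → ℝ)
    (hX₁ : Integrable X₁ P) (hX₂ : Integrable X₂ P)
    (lam : ℝ) (hlam : lam ∈ Set.Icc (0 : ℝ) 1) (γ : ℝ) (hγ : γ ∈ Set.Ioo (0 : ℝ) 1) :
    CVaR P (fun ω => lam * X₁ ω + (1 - lam) * X₂ ω) γ
      ≤ lam * CVaR P X₁ γ + (1 - lam) * CVaR P X₂ γ := by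
  set Y₁ := hX₁.1.mk X₁ with hY₁def
  set Y₂ := hX₂.1.mk X₂ with hY₂def
  have hae₁ : X₁ =ᵐ[P] Y₁ := hX₁.1.ae_eq_mk
  have hae₂ : X₂ =ᵐ[P] Y₂ := hX₂.1.ae_eq_mk
  have hm₁ : Measurable Y₁ := hX₁.1.stronglyMeasurable_mk.measurable
  have hm₂ : Measurable Y₂ := hX₂.1.stronglyMeasurable_mk.measurable
  have hY₁ : Integrable Y₁ P := hX₁.congr hae₁
  have hY₂ : Integrable Y₂ P := hX₂.congr hae₂
  have hmix : (fun ω => lam * X₁ ω + (1 - lam) * X₂ ω)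
      =ᵐ[P] (fun ω => lam * Y₁ ω + (1 - lam) * Y₂ ω) := by
    filter_upwards [hae₁, hae₂] with ω h₁ h₂
    rw [h₁, h₂]
  rw [CVaR_congr' P hmix γ, CVaR_congr' P hae₁ γ, CVaR_congr' P hae₂ γ]
  exact CVaR_convex_meas P hm₁ hm₂ hY₁ hY₂ lam hlam γ hγ
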